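/- Let H = (V, μ) be an m-isolated k-hypergraph of dimension d with m < k, and let S be a family of k-hypergraphs of dimension d that is simple for {H}. Then there is a hypergraph G ∈ Σ_ℤ(Eqs(S)) such that H + G is pre (m+1)-isolated. Moreover, if |V| > 2k − 1, then V supports G for the family S. -/

import Mathlib

/-- A hypergraph (of dimension `d`) over the data domain `ℕ`, represented by its
weight function: a finitely supported function from finite sets of data values
(potential hyperedges) to weight vectors in `ℤ^d`.  Isolated vertices are
irrelevant (hypergraphs are identified up to isolated vertices). -/
abbrev HG (d : ℕ) := (Finset ℕ) →₀ (Fin d → ℤ)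

/-- `H` is a `k`-hypergraph: every hyperedge (set with nonzero weight) has `k` elements. -/
def IsHG (k : ℕ) {d : ℕ} (H : HG d) : Prop := ∀ e ∈ H.support, e.card = k

/-- The (non-isolated) vertices of `H`: the union of its hyperedges. -/
def verts {d : ℕ} (H : HG d) : Finset ℕ := H.support.sup id

/-- The weight `w_X(H)` of a finite set `X`: the sum of the weights of all
hyperedges of `H` that contain `X`. -/
def weight {d : ℕ} (X : Finset ℕ) (H : HG d) : Fin d → ℤ :=
  ∑ e ∈ H.support.filter (fun e => X ⊆ e), H e
/-- Two hypergraphs are equivalent if (after discarding isolated vertices) they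
differ by a permutation of the data domain. -/
def HGEquiv {d : ℕ} (H₁ H₂ : HG d) : Prop :=
  ∃ π : ℕ ≃ ℕ, ∀ e : Finset ℕ, H₂ (e.image π) = H₁ e

/-- All hypergraphs equivalent to a member of the family `𝒢`. -/
def Eqs {d : ℕ} (𝒢 : Set (HG d)) : Set (HG d) := {H | ∃ G ∈ 𝒢, HGEquiv G H}

/-- `Σ_ℤ(𝒢)`: all finite `ℤ`-linear combinations of members of `𝒢`. -/
def Zsum {d : ℕ} (𝒢 : Set (HG d)) : Set (HG d) :=
  {H | ∃ (l : ℕ) (c : Fin l → ℤ) (F : Fin l → HG d),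
      (∀ i, F i ∈ 𝒢) ∧ H = ∑ i, c i • F i}
/-- `H` is `m`-isolated: `w_X(H) = 0` for every set `X` of vertices of `H`
with `|X| ≤ m`. -/
def IsIsolated {d : ℕ} (m : ℕ) (H : HG d) : Prop :=
  ∀ X : Finset ℕ, X ⊆ verts H → X.card ≤ m → weight X H = 0
/-- `H` is pre `m`-isolated: `H` is `(m−1)`-isolated, and there is a set `X`
of vertices of `H` with `|X| ≤ 2m−1` such that `w_Y(H) = 0` for every
`m`-element set `Y` of vertices not contained in `X`. -/
def PreIsolated {d : ℕ} (m : ℕ) (H : HG d) : Prop :=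
  IsIsolated (m - 1) H ∧
  ∃ X : Finset ℕ, X ⊆ verts H ∧ X.card ≤ 2 * m - 1 ∧
    ∀ Y : Finset ℕ, Y ⊆ verts H → Y.card = m → ¬ Y ⊆ X → weight Y H = 0
/-- `G` is an `(m, a)`-simple `k`-hypergraph:
its vertex set is (contained in) a disjoint union `A ∪ B ∪ C` with
`A = {α₁, …, α_m}`, `B = {β₁, …, β_m}` and `|C| = 2(k−m) − 1`
(`C = ∅` when `m = k`), such that
`w_X(G) = (−1)^{|B ∩ X|} · a` for every `X = {x₁, …, x_m}` with
`x_i ∈ {α_i, β_i}` for each `i`, `w_X(G) = 0` for every other `m`-element set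
`X` of vertices, and `w_X(G) = 0` for every set `X` of vertices with
`|X| < m`. -/
def IsSimple {d : ℕ} (k m : ℕ) (a : Fin d → ℤ) (G : HG d) : Prop :=
  ∃ (A B C : Finset ℕ) (α β : Fin m → ℕ),
    Function.Injective α ∧ Function.Injective β ∧
    A = Finset.image α Finset.univ ∧ B = Finset.image β Finset.univ ∧
    Disjoint A B ∧ Disjoint A C ∧ Disjoint B C ∧
    C.card = 2 * (k - m) - 1 ∧
    verts G ⊆ A ∪ B ∪ C ∧
    (∀ χ : Fin m → Bool,
      weight (Finset.image (fun i => if χ i then β i else α i) Finset.univ) G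
        = ((-1 : ℤ) ^ (Finset.univ.filter (fun i => χ i = true)).card) • a) ∧
    (∀ X : Finset ℕ, X ⊆ A ∪ B ∪ C → X.card = m →
        (∀ χ : Fin m → Bool,
          X ≠ Finset.image (fun i => if χ i then β i else α i) Finset.univ) →
        weight X G = 0) ∧
    (∀ X : Finset ℕ, X ⊆ A ∪ B ∪ C → X.card < m → weight X G = 0)

/-- `S` is a simplification of the family `𝒢`: for every `0 ≤ m ≤ k` and every
vector `g` in the `ℤ`-span of the weights of `m`-element sets of vertices of
members of `𝒢`, the family `S` contains an `(m, g)`-simple `k`-hypergraph. -/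
def IsSimplificationOf {d : ℕ} (k : ℕ) (S 𝒢 : Set (HG d)) : Prop :=
  ∀ m : ℕ, m ≤ k →
    ∀ g ∈ Submodule.span ℤ
      {w : Fin d → ℤ | ∃ G ∈ 𝒢, ∃ X : Finset ℕ,
        X ⊆ verts G ∧ X.card = m ∧ w = weight X G},
      ∃ G' ∈ S, IsSimple k m g G'

/-- `S` is self-simplified: `S` is a simplification of `S` itself. -/
def SelfSimplified {d : ℕ} (k : ℕ) (S : Set (HG d)) : Prop :=
  IsSimplificationOf k S S

/-- `S` is simple for `𝒢`: `S` is self-simplified and a simplification of `𝒢`. -/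
def SimpleFor {d : ℕ} (k : ℕ) (S 𝒢 : Set (HG d)) : Prop :=
  SelfSimplified k S ∧ IsSimplificationOf k S 𝒢
/-- A set `V` of data values supports a hypergraph `H` for the family `𝓗` if
`H = Σᵢ aᵢ · Hᵢ` for some integers `aᵢ` and hypergraphs `Hᵢ ∈ Eqs(𝓗)` whose
vertex sets are all contained in `V`. -/
def Supports {d : ℕ} (V : Finset ℕ) (H : HG d) (𝓗 : Set (HG d)) : Prop :=
  ∃ (l : ℕ) (c : Fin l → ℤ) (F : Fin l → HG d),
    (∀ i, F i ∈ Eqs 𝓗) ∧ (∀ i, verts (F i) ⊆ V) ∧ H = ∑ i, c i • F i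

section Dev

open Finset

variable {d : ℕ}

noncomputable section

/-! ### Basic weight lemmas -/

lemma weight_eq_sum_subset {X : Finset ℕ} {H : HG d} {E : Finset (Finset ℕ)}
    (hE : H.support ⊆ E) :
    weight X H = ∑ e ∈ E, if X ⊆ e then H e else 0 := by
  classical
  rw [weight, Finset.sum_filter]
  exact Finset.sum_subset hE (by
    intro e he hne
    simp [Finsupp.notMem_support_iff.mp hne])

lemma edge_subset_verts {H : HG d} {e : Finset ℕ} (he : e ∈ H.support) : e ⊆ verts H := by
  intro x hx
  exact Finset.le_sup (f := id) he hx

lemma weight_eq_zero_of_not_subset {X : Finset ℕ} {H : HG d} (h : ¬ X ⊆ verts H) :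
    weight X H = 0 := by
  classical
  rw [weight]
  rw [Finset.filter_false_of_mem, Finset.sum_empty]
  intro e he hXe
  exact h (hXe.trans (edge_subset_verts he))

lemma weight_add (X : Finset ℕ) (H G : HG d) :
    weight X (H + G) = weight X H + weight X G := by
  classical
  have hE : (H + G).support ⊆ H.support ∪ G.support := Finsupp.support_add
  rw [weight_eq_sum_subset hE,
      weight_eq_sum_subset (E := H.support ∪ G.support) Finset.subset_union_left,
      weight_eq_sum_subset (E := H.support ∪ G.support) Finset.subset_union_right,
      ← Finset.sum_add_distrib]
  refine Finset.sum_congr rfl fun e _ => ?_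
  by_cases h : X ⊆ e <;> simp [h]

/-- `weight X` as an additive monoid hom. -/
def weightHom (X : Finset ℕ) : HG d →+ (Fin d → ℤ) where
  toFun H := weight X H
  map_zero' := by
    classical
    simp [weight]
  map_add' H G := weight_add X H G

lemma weight_sum {ι : Type*} (X : Finset ℕ) (s : Finset ι) (F : ι → HG d) :
    weight X (∑ i ∈ s, F i) = ∑ i ∈ s, weight X (F i) :=
  map_sum (weightHom (d := d) X) F s

lemma weight_zsmul (X : Finset ℕ) (c : ℤ) (H : HG d) :
    weight X (c • H) = c • weight X H :=
  map_zsmul (weightHom (d := d) X) c H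

lemma verts_add_subset (H G : HG d) : verts (H + G) ⊆ verts H ∪ verts G := by
  classical
  rw [verts]
  show (H + G).support.sup id ≤ verts H ⊔ verts G
  apply Finset.sup_le
  intro e he
  have := Finsupp.support_add (g₁ := H) (g₂ := G) he
  rcases Finset.mem_union.mp this with h | h
  · exact (edge_subset_verts h).trans Finset.subset_union_left
  · exact (edge_subset_verts h).trans Finset.subset_union_right

/-! ### Renaming along a permutation of `ℕ` -/

/-- The embedding `e ↦ e.image π` of finsets induced by a permutation. -/
def imgEmb (π : ℕ ≃ ℕ) : Finset ℕ ↪ Finset ℕ :=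
  ⟨fun e => e.image π, Finset.image_injective π.injective⟩

/-- Renaming of a hypergraph along a permutation of the data domain. -/
def mapHG (π : ℕ ≃ ℕ) (H : HG d) : HG d := Finsupp.embDomain (imgEmb π) H

lemma mapHG_apply (π : ℕ ≃ ℕ) (H : HG d) (e : Finset ℕ) :
    mapHG π H (e.image π) = H e :=
  Finsupp.embDomain_apply_self (imgEmb π) H e

lemma hgEquiv_mapHG (π : ℕ ≃ ℕ) (H : HG d) : HGEquiv H (mapHG π H) :=
  ⟨π, fun e => mapHG_apply π H e⟩

lemma verts_mapHG (π : ℕ ≃ ℕ) (H : HG d) :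
    verts (mapHG π H) = (verts H).image π := by
  classical
  rw [verts, mapHG, Finsupp.support_embDomain, Finset.sup_map, verts]
  rw [Finset.comp_sup_eq_sup_comp (g := fun s : Finset ℕ => s.image π)]
  · rfl
  · intro x y; exact Finset.image_union _ _
  · exact Finset.image_empty _

lemma weight_mapHG (π : ℕ ≃ ℕ) (X : Finset ℕ) (H : HG d) :
    weight (X.image π) (mapHG π H) = weight X H := by
  classical
  rw [weight, mapHG, Finsupp.support_embDomain, Finset.filter_map, Finset.sum_map]
  rw [weight]
  refine Finset.sum_congr ?_ fun e he => ?_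
  · apply Finset.filter_congr
    intro e _
    simp only [imgEmb, Function.Embedding.coeFn_mk, Function.comp_apply]
    rw [Finset.image_subset_image_iff π.injective]
  · exact Finsupp.embDomain_apply_self (imgEmb π) H e

/-- weight of a renamed hypergraph at an arbitrary set, via pulling back. -/
lemma weight_mapHG' (π : ℕ ≃ ℕ) (Y : Finset ℕ) (H : HG d) :
    weight Y (mapHG π H) = weight (Y.image π.symm) H := by
  have : (Y.image π.symm).image π = Y := by
    rw [Finset.image_image]
    simp
  conv_lhs => rw [← this]
  exact weight_mapHG π _ H

end
end Dev
section PT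

open Finset

/-! ### Polytabloids -/

/-- The "mixed" set selected by `χ`: at index `i` pick `β i` if `χ i` and `α i` otherwise. -/
def mixed {r : ℕ} (α β : Fin r → ℕ) (χ : Fin r → Bool) : Finset ℕ :=
  Finset.image (fun i => if χ i then β i else α i) Finset.univ

/-- Sign of a choice function. -/
def ptSign {r : ℕ} (χ : Fin r → Bool) : ℤ :=
  (-1) ^ (Finset.univ.filter (fun i => χ i = true)).card

/-- Polytabloid indicator: signed sum over all mixed sets. -/
def pt {r : ℕ} (α β : Fin r → ℕ) (Y : Finset ℕ) : ℤ :=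
  ∑ χ : Fin r → Bool, if Y = mixed α β χ then ptSign χ else 0

lemma ptSign_eq_prod {r : ℕ} (χ : Fin r → Bool) :
    ptSign χ = ∏ i, (if χ i then (-1 : ℤ) else 1) := by
  classical
  rw [ptSign, ← Finset.prod_filter_mul_prod_filter_not Finset.univ (fun i => χ i = true)]
  rw [Finset.prod_congr rfl (fun i hi => if_pos (Finset.mem_filter.mp hi).2),
      Finset.prod_const]
  rw [Finset.prod_congr rfl (fun i hi => if_neg (by
    have := (Finset.mem_filter.mp hi).2; simpa using this)), Finset.prod_const, one_pow, mul_one]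

lemma sum_elim_inj_iff {r s : ℕ} {α : Fin r → ℕ} {β : Fin s → ℕ} :
    Function.Injective (Sum.elim α β) ↔
      Function.Injective α ∧ Function.Injective β ∧ ∀ i j, α i ≠ β j := by
  constructor
  · intro h
    refine ⟨fun i j hij => ?_, fun i j hij => ?_, fun i j hij => ?_⟩
    · have := h (a₁ := Sum.inl i) (a₂ := Sum.inl j) (by simpa using hij); simpa using this
    · have := h (a₁ := Sum.inr i) (a₂ := Sum.inr j) (by simpa using hij); simpa using this
    · have := h (a₁ := Sum.inl i) (a₂ := Sum.inr j) (by simpa using hij); simp at this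
  · rintro ⟨h1, h2, h3⟩ x y hxy
    cases x <;> cases y <;> simp at hxy ⊢
    · exact h1 hxy
    · exact absurd hxy (h3 _ _)
    · exact absurd hxy.symm (h3 _ _)
    · exact h2 hxy

section withInj

variable {r : ℕ} {α β : Fin r → ℕ} (hinj : Function.Injective (Sum.elim α β))

include hinj

lemma choice_injective (χ : Fin r → Bool) :
    Function.Injective (fun i => if χ i then β i else α i) := by
  obtain ⟨h1, h2, h3⟩ := sum_elim_inj_iff.mp hinj
  intro i j hij
  simp only at hij
  by_cases hi : χ i <;> by_cases hj : χ j <;> simp [hi, hj] at hij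
  · exact h2 hij
  · exact absurd hij.symm (h3 _ _)
  · exact absurd hij (h3 _ _)
  · exact h1 hij

lemma card_mixed (χ : Fin r → Bool) : (mixed α β χ).card = r := by
  classical
  rw [mixed, Finset.card_image_of_injective _ (choice_injective hinj χ)]
  simp

lemma mixed_injective : Function.Injective (mixed α β) := by
  classical
  obtain ⟨h1, h2, h3⟩ := sum_elim_inj_iff.mp hinj
  intro χ χ' h
  funext i
  by_contra hne
  have hmem : (if χ i then β i else α i) ∈ mixed α β χ' := by
    rw [← h]; exact Finset.mem_image_of_mem _ (Finset.mem_univ i)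
  obtain ⟨j, -, hj⟩ := Finset.mem_image.mp hmem
  cases hci : χ i <;> cases hcj : χ' j <;> rw [hci, hcj] at hj <;>
    simp at hj
  · exact hne (hci.trans ((h1 hj) ▸ hcj).symm)
  · exact h3 _ _ hj.symm
  · exact h3 _ _ hj
  · exact hne (hci.trans ((h2 hj) ▸ hcj).symm)

lemma pt_mixed (χ₀ : Fin r → Bool) : pt α β (mixed α β χ₀) = ptSign χ₀ := by
  classical
  rw [pt]
  rw [Finset.sum_eq_single_of_mem χ₀ (Finset.mem_univ _)]
  · simp
  · intro χ _ hne
    rw [if_neg]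
    intro h
    exact hne ((mixed_injective hinj h).symm)

end withInj

lemma pt_eq_zero_of_not_mixed {r : ℕ} {α β : Fin r → ℕ} {Y : Finset ℕ}
    (h : ∀ χ, Y ≠ mixed α β χ) : pt α β Y = 0 := by
  rw [pt]
  exact Finset.sum_eq_zero fun χ _ => if_neg (h χ)

lemma mixed_subset {r : ℕ} {α β : Fin r → ℕ} {T : Finset ℕ}
    (hT : ∀ i, α i ∈ T ∧ β i ∈ T) (χ : Fin r → Bool) : mixed α β χ ⊆ T := by
  rw [mixed]
  intro x hx
  obtain ⟨i, -, rfl⟩ := Finset.mem_image.mp hx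
  by_cases hi : χ i <;> simp [hi, (hT i).1, (hT i).2]

lemma not_mem_mixed {r : ℕ} {α β : Fin r → ℕ} {t : ℕ}
    (htα : ∀ i, t ≠ α i) (htβ : ∀ i, t ≠ β i) (χ : Fin r → Bool) : t ∉ mixed α β χ := by
  rw [mixed]
  intro h
  obtain ⟨i, -, hi⟩ := Finset.mem_image.mp h
  by_cases hv : χ i <;> simp [hv] at hi
  · exact htβ i hi.symm
  · exact htα i hi.symm

end PT
section PT2

open Finset

lemma ptSign_update {r : ℕ} (χ : Fin r → Bool) (i : Fin r) :
    ptSign (Function.update χ i (!χ i)) = - ptSign χ := by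
  classical
  rw [ptSign_eq_prod, ptSign_eq_prod,
    ← Finset.mul_prod_erase Finset.univ
      (fun j => if Function.update χ i (!χ i) j then (-1:ℤ) else 1) (Finset.mem_univ i),
    ← Finset.mul_prod_erase Finset.univ
      (fun j => if χ j then (-1:ℤ) else 1) (Finset.mem_univ i)]
  have h1 : ∏ j ∈ Finset.univ.erase i, (if Function.update χ i (!χ i) j then (-1:ℤ) else 1)
      = ∏ j ∈ Finset.univ.erase i, (if χ j then (-1:ℤ) else 1) :=
    Finset.prod_congr rfl (fun j hj => by
      rw [Function.update_of_ne (Finset.ne_of_mem_erase hj)])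
  rw [h1, Function.update_self]
  cases hc : χ i <;> simp [neg_mul]

section withInj

variable {r : ℕ} {α β : Fin r → ℕ} (hinj : Function.Injective (Sum.elim α β))

include hinj

/-- Helper: if the choice of `χ` at `i₀` is not in `Z ⊆ mixed χ`, neither is the other choice. -/
lemma other_not_mem {Z : Finset ℕ} {χ : Fin r → Bool} (hsub : Z ⊆ mixed α β χ) (i₀ : Fin r) :
    (if !χ i₀ then β i₀ else α i₀) ∉ Z := by
  classical
  obtain ⟨h1, h2, h3⟩ := sum_elim_inj_iff.mp hinj
  intro hmem
  have hmix : (if !χ i₀ then β i₀ else α i₀) ∈ mixed α β χ := hsub hmem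
  obtain ⟨j, -, hj⟩ := Finset.mem_image.mp hmix
  cases hc : χ i₀ <;> rw [hc] at hj <;> cases hcj : χ j <;> rw [hcj] at hj <;> simp at hj
  · exact h3 _ _ hj
  · have : j = i₀ := h2 hj
    rw [this, hc] at hcj; exact Bool.noConfusion hcj
  · have : j = i₀ := h1 hj
    rw [this, hc] at hcj; exact Bool.noConfusion hcj
  · exact h3 _ _ hj.symm

lemma exists_unique_missing {Z : Finset ℕ} {χ : Fin r → Bool} (hZcard : Z.card + 1 = r)
    (hsub : Z ⊆ mixed α β χ) : ∃! i : Fin r, (if χ i then β i else α i) ∉ Z := by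
  classical
  have hcard1 : (mixed α β χ \ Z).card = 1 := by
    rw [Finset.card_sdiff_of_subset hsub, card_mixed hinj]
    omega
  obtain ⟨v₀, hv₀⟩ := Finset.card_eq_one.mp hcard1
  have hv₀m : v₀ ∈ mixed α β χ ∧ v₀ ∉ Z := by
    have : v₀ ∈ mixed α β χ \ Z := by rw [hv₀]; exact Finset.mem_singleton_self v₀
    exact ⟨(Finset.mem_sdiff.mp this).1, (Finset.mem_sdiff.mp this).2⟩
  obtain ⟨i₀, -, hi₀⟩ := Finset.mem_image.mp hv₀m.1
  refine ⟨i₀, ?_, ?_⟩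
  · show (if χ i₀ = true then β i₀ else α i₀) ∉ Z
    rw [hi₀]; exact hv₀m.2
  · intro j hj
    have hj' : (if χ j = true then β j else α j) ∉ Z := hj
    have hjm : (if χ j = true then β j else α j) ∈ mixed α β χ \ Z :=
      Finset.mem_sdiff.mpr ⟨Finset.mem_image_of_mem _ (Finset.mem_univ j), hj'⟩
    rw [hv₀, Finset.mem_singleton] at hjm
    apply choice_injective hinj χ
    show (if χ j = true then β j else α j) = (if χ i₀ = true then β i₀ else α i₀)
    rw [hjm, hi₀]

lemma pt_closure {T Z : Finset ℕ} (hZcard : Z.card + 1 = r)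
    (hT : ∀ i, α i ∈ T ∧ β i ∈ T) :
    ∑ v ∈ T \ Z, pt α β (insert v Z) = 0 := by
  classical
  unfold pt
  rw [Finset.sum_comm]
  have inner : ∀ χ : Fin r → Bool,
      (∑ v ∈ T \ Z, if insert v Z = mixed α β χ then ptSign χ else 0)
        = if Z ⊆ mixed α β χ then ptSign χ else 0 := by
    intro χ
    by_cases hsub : Z ⊆ mixed α β χ
    · rw [if_pos hsub]
      have hcard1 : (mixed α β χ \ Z).card = 1 := by
        rw [Finset.card_sdiff_of_subset hsub, card_mixed hinj]; omega
      obtain ⟨v₀, hv₀⟩ := Finset.card_eq_one.mp hcard1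
      have hv₀sd : v₀ ∈ mixed α β χ \ Z := by rw [hv₀]; exact Finset.mem_singleton_self v₀
      have hv₀m : v₀ ∈ mixed α β χ := (Finset.mem_sdiff.mp hv₀sd).1
      have hv₀Z : v₀ ∉ Z := (Finset.mem_sdiff.mp hv₀sd).2
      have hins : insert v₀ Z = mixed α β χ := by
        apply Finset.Subset.antisymm
        · exact Finset.insert_subset hv₀m hsub
        · intro x hx
          by_cases hxZ : x ∈ Z
          · exact Finset.mem_insert_of_mem hxZ
          · have hxm : x ∈ mixed α β χ \ Z := Finset.mem_sdiff.mpr ⟨hx, hxZ⟩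
            rw [hv₀, Finset.mem_singleton] at hxm
            rw [hxm]; exact Finset.mem_insert_self _ _
      have hv₀T : v₀ ∈ T := mixed_subset hT χ hv₀m
      rw [Finset.sum_eq_single_of_mem v₀ (Finset.mem_sdiff.mpr ⟨hv₀T, hv₀Z⟩)]
      · rw [if_pos hins]
      · intro v hv hvne
        rw [if_neg]
        intro hEq
        have hvm : v ∈ mixed α β χ \ Z := by
          rw [← hEq]
          exact Finset.mem_sdiff.mpr
            ⟨Finset.mem_insert_self _ _, (Finset.mem_sdiff.mp hv).2⟩
        rw [hv₀, Finset.mem_singleton] at hvm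
        exact hvne hvm
    · rw [if_neg hsub]
      apply Finset.sum_eq_zero
      intro v hv
      rw [if_neg]
      intro hEq
      exact hsub (by rw [← hEq]; exact (Finset.subset_insert v Z))
  rw [Finset.sum_congr rfl (fun χ _ => inner χ), ← Finset.sum_filter]
  set s := Finset.univ.filter (fun χ : Fin r → Bool => Z ⊆ mixed α β χ) with hs
  have hmemsub : ∀ χ ∈ s, Z ⊆ mixed α β χ := fun χ hχ => (Finset.mem_filter.mp hχ).2
  have hrpos : 0 < r := by omega
  set pick : (Fin r → Bool) → Fin r := fun χ =>
    if h : Z ⊆ mixed α β χ then Fintype.choose _ (exists_unique_missing hinj hZcard h)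
    else ⟨0, hrpos⟩ with hpick
  have pick_spec : ∀ χ, Z ⊆ mixed α β χ →
      (if χ (pick χ) = true then β (pick χ) else α (pick χ)) ∉ Z := by
    intro χ h
    rw [hpick]
    simp only [dif_pos h]
    exact Fintype.choose_spec _ (exists_unique_missing hinj hZcard h)
  have pick_unique : ∀ χ, Z ⊆ mixed α β χ → ∀ j : Fin r,
      (if χ j = true then β j else α j) ∉ Z → j = pick χ := by
    intro χ h j hj
    rw [hpick]
    simp only [dif_pos h]
    exact (exists_unique_missing hinj hZcard h).unique hj
      (Fintype.choose_spec _ (exists_unique_missing hinj hZcard h))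
  set g' : (Fin r → Bool) → (Fin r → Bool) := fun χ =>
    Function.update χ (pick χ) (!χ (pick χ)) with hg'
  have g'_mem : ∀ χ, Z ⊆ mixed α β χ → Z ⊆ mixed α β (g' χ) := by
    intro χ h z hz
    have hzm : z ∈ mixed α β χ := h hz
    obtain ⟨j, -, hj⟩ := Finset.mem_image.mp hzm
    have hji : j ≠ pick χ := by
      intro hEq
      apply pick_spec χ h
      rw [← hEq, hj]
      exact hz
    refine Finset.mem_image.mpr ⟨j, Finset.mem_univ _, ?_⟩
    show (if (g' χ) j = true then β j else α j) = z
    rw [hg']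
    simp only [Function.update_of_ne hji]
    exact hj
  have g'_pick : ∀ χ, Z ⊆ mixed α β χ → pick (g' χ) = pick χ := by
    intro χ h
    refine (pick_unique (g' χ) (g'_mem χ h) (pick χ) ?_).symm
    have : (g' χ) (pick χ) = !χ (pick χ) := by rw [hg']; exact Function.update_self _ _ _
    rw [this]
    exact other_not_mem hinj h (pick χ)
  have g'_invol : ∀ χ, Z ⊆ mixed α β χ → g' (g' χ) = χ := by
    intro χ h
    rw [hg']
    simp only
    rw [g'_pick χ h]
    rw [Function.update_self, Bool.not_not, Function.update_idem, Function.update_eq_self]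
  refine Finset.sum_involution (fun χ _ => g' χ)
    (fun χ hχ => ?_) (fun χ hχ _ => ?_) (fun χ hχ => ?_) (fun χ hχ => ?_)
  · show ptSign χ + ptSign (g' χ) = 0
    rw [hg']
    simp only
    rw [ptSign_update]
    ring
  · show g' χ ≠ χ
    intro hEq
    have := congrFun hEq (pick χ)
    rw [hg'] at this
    simp only [Function.update_self] at this
    exact Bool.not_ne_self _ this
  · show g' χ ∈ s
    rw [hs, Finset.mem_filter]
    exact ⟨Finset.mem_univ _, g'_mem χ (hmemsub χ hχ)⟩
  · show g' (g' χ) = χ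
    exact g'_invol χ (hmemsub χ hχ)

end withInj

lemma pt_ne_zero_imp {r : ℕ} {α β : Fin r → ℕ} {Y : Finset ℕ} (h : pt α β Y ≠ 0) :
    ∃ χ, Y = mixed α β χ := by
  by_contra hc
  push_neg at hc
  exact h (pt_eq_zero_of_not_mixed hc)

lemma injective_cons {r : ℕ} {α β : Fin r → ℕ} (hinj : Function.Injective (Sum.elim α β))
    {t c : ℕ} (htα : ∀ i, t ≠ α i) (htβ : ∀ i, t ≠ β i)
    (hcα : ∀ i, c ≠ α i) (hcβ : ∀ i, c ≠ β i) (htc : t ≠ c) :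
    Function.Injective (Sum.elim (Fin.cons t α) (Fin.cons c β)) := by
  obtain ⟨h1, h2, h3⟩ := sum_elim_inj_iff.mp hinj
  rw [sum_elim_inj_iff]
  refine ⟨?_, ?_, ?_⟩
  · rw [Fin.cons_injective_iff]
    exact ⟨by rintro ⟨i, hi⟩; exact htα i hi.symm, h1⟩
  · rw [Fin.cons_injective_iff]
    exact ⟨by rintro ⟨i, hi⟩; exact hcβ i hi.symm, h2⟩
  · intro i j
    induction i using Fin.cases with
    | zero =>
      induction j using Fin.cases with
      | zero => simpa using htc
      | succ j => simpa using htβ j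
    | succ i =>
      induction j using Fin.cases with
      | zero =>
        simp only [Fin.cons_succ, Fin.cons_zero]
        exact fun h => hcα i h.symm
      | succ j => simpa using h3 i j

lemma mixed_cons {r : ℕ} (α β : Fin r → ℕ) (t c : ℕ) (b : Bool) (χ : Fin r → Bool) :
    mixed (Fin.cons t α) (Fin.cons c β) (Fin.cons b χ) =
      insert (if b then c else t) (mixed α β χ) := by
  classical
  ext x
  simp only [mixed, Finset.mem_image, Finset.mem_insert, Finset.mem_univ, true_and]
  constructor
  · rintro ⟨i, rfl⟩
    induction i using Fin.cases with
    | zero => left; simp [Fin.cons_zero]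
    | succ i => right; exact ⟨i, by simp [Fin.cons_succ]⟩
  · rintro (rfl | ⟨i, rfl⟩)
    · exact ⟨0, by simp [Fin.cons_zero]⟩
    · exact ⟨i.succ, by simp [Fin.cons_succ]⟩

lemma ptSign_cons {r : ℕ} (b : Bool) (χ : Fin r → Bool) :
    ptSign (Fin.cons b χ) = (if b then (-1:ℤ) else 1) * ptSign χ := by
  rw [ptSign_eq_prod, ptSign_eq_prod, Fin.prod_univ_succ]
  simp [Fin.cons_zero, Fin.cons_succ]

lemma pt_cons_of_mem {r : ℕ} {α β : Fin r → ℕ} {t c : ℕ}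
    (htα : ∀ i, t ≠ α i) (htβ : ∀ i, t ≠ β i) (htc : t ≠ c)
    {Y : Finset ℕ} (htY : t ∈ Y) :
    pt (Fin.cons t α) (Fin.cons c β) Y = pt α β (Y.erase t) := by
  classical
  rw [pt, ← Equiv.sum_comp (Fin.consEquiv (fun _ : Fin (r+1) => Bool)), Fintype.sum_prod_type]
  have happ : ∀ (b : Bool) (χ : Fin r → Bool),
      (Fin.consEquiv (fun _ : Fin (r+1) => Bool)) (b, χ) = Fin.cons b χ := fun _ _ => rfl
  rw [Fintype.sum_bool]
  have htrue : (∑ χ : Fin r → Bool,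
      if Y = mixed (Fin.cons t α) (Fin.cons c β)
          ((Fin.consEquiv (fun _ : Fin (r+1) => Bool)) (true, χ)) then
        ptSign ((Fin.consEquiv (fun _ : Fin (r+1) => Bool)) (true, χ)) else 0) = 0 := by
    apply Finset.sum_eq_zero
    intro χ _
    rw [happ, if_neg]
    intro hEq
    have : t ∈ insert c (mixed α β χ) := by
      rw [show insert c (mixed α β χ) = Y by rw [hEq, mixed_cons]; simp]
      exact htY
    rcases Finset.mem_insert.mp this with h | h
    · exact htc h
    · exact not_mem_mixed htα htβ χ h
  rw [htrue, zero_add]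
  rw [pt]
  refine Finset.sum_congr rfl fun χ _ => ?_
  rw [happ, mixed_cons, ptSign_cons]
  simp only [if_neg Bool.false_ne_true, Bool.false_eq_true, if_false, one_mul]
  have hiff : Y = insert t (mixed α β χ) ↔ Y.erase t = mixed α β χ := by
    constructor
    · rintro rfl; exact Finset.erase_insert (not_mem_mixed htα htβ χ)
    · intro h; rw [← h]; exact (Finset.insert_erase htY).symm
  rw [if_congr hiff rfl rfl]

end PT2
section Specht

open Finset

variable {d : ℕ}

/-- Down operator (sum over one-point extensions inside `T`). -/
def Dop (T : Finset ℕ) (f : Finset ℕ → (Fin d → ℤ)) (Z : Finset ℕ) : Fin d → ℤ :=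
  ∑ v ∈ T \ Z, f (insert v Z)

/-- Up operator (sum over one-point deletions). -/
def Uop (f : Finset ℕ → (Fin d → ℤ)) (Y : Finset ℕ) : Fin d → ℤ :=
  ∑ x ∈ Y, f (Y.erase x)

/-- `r`-element subsets of `T`. -/
def lev (T : Finset ℕ) (r : ℕ) : Finset (Finset ℕ) :=
  T.powerset.filter (fun Y => Y.card = r)

lemma mem_lev {T : Finset ℕ} {r : ℕ} {Y : Finset ℕ} :
    Y ∈ lev T r ↔ Y ⊆ T ∧ Y.card = r := by
  rw [lev, Finset.mem_filter, Finset.mem_powerset]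

/-- Integer inner product of two vectors. -/
def inn (v w : Fin d → ℤ) : ℤ := ∑ c, v c * w c

lemma inn_sum_left {ι : Type*} (s : Finset ι) (v : ι → Fin d → ℤ) (w : Fin d → ℤ) :
    inn (∑ x ∈ s, v x) w = ∑ x ∈ s, inn (v x) w := by
  unfold inn
  rw [Finset.sum_comm]
  refine Finset.sum_congr rfl fun c _ => ?_
  rw [Finset.sum_apply, Finset.sum_mul]

lemma inn_sum_right {ι : Type*} (s : Finset ι) (v : Fin d → ℤ) (w : ι → Fin d → ℤ) :
    inn v (∑ x ∈ s, w x) = ∑ x ∈ s, inn v (w x) := by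
  unfold inn
  rw [Finset.sum_comm]
  refine Finset.sum_congr rfl fun c _ => ?_
  rw [Finset.sum_apply, Finset.mul_sum]

lemma inn_add_right (v w₁ w₂ : Fin d → ℤ) : inn v (w₁ + w₂) = inn v w₁ + inn v w₂ := by
  unfold inn
  rw [← Finset.sum_add_distrib]
  refine Finset.sum_congr rfl fun c _ => ?_
  simp [mul_add]

lemma inn_smul_right (c : ℤ) (v w : Fin d → ℤ) : inn v (c • w) = c * inn v w := by
  unfold inn
  rw [Finset.mul_sum]
  refine Finset.sum_congr rfl fun i _ => ?_
  simp [Pi.smul_apply]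
  ring

lemma inn_self_nonneg (v : Fin d → ℤ) : 0 ≤ inn v v :=
  Finset.sum_nonneg fun c _ => mul_self_nonneg _

lemma inn_self_eq_zero {v : Fin d → ℤ} (h : inn v v = 0) : v = 0 := by
  funext c
  have := (Finset.sum_eq_zero_iff_of_nonneg (fun i _ => mul_self_nonneg (v i))).mp h
      c (Finset.mem_univ c)
  exact mul_self_eq_zero.mp this

/-- Adjointness of `Uop` and `Dop`. -/
lemma adjoint (T : Finset ℕ) (r : ℕ) (f g : Finset ℕ → Fin d → ℤ) :
    ∑ Z ∈ lev T (r+1), inn (Uop f Z) (g Z) = ∑ Y ∈ lev T r, inn (f Y) (Dop T g Y) := by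
  classical
  have lhs : ∑ Z ∈ lev T (r+1), inn (Uop f Z) (g Z)
      = ∑ p ∈ (lev T (r+1)).sigma (fun Z => Z), inn (f (p.1.erase p.2)) (g p.1) := by
    rw [Finset.sum_sigma]
    exact Finset.sum_congr rfl fun Z _ => by rw [Uop, inn_sum_left]
  have rhs : ∑ Y ∈ lev T r, inn (f Y) (Dop T g Y)
      = ∑ p ∈ (lev T r).sigma (fun Y => T \ Y), inn (f p.1) (g (insert p.2 p.1)) := by
    rw [Finset.sum_sigma]
    exact Finset.sum_congr rfl fun Y _ => by rw [Dop, inn_sum_right]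
  rw [lhs, rhs]
  refine Finset.sum_nbij' (fun p => ⟨p.1.erase p.2, p.2⟩) (fun p => ⟨insert p.2 p.1, p.2⟩)
    ?_ ?_ ?_ ?_ ?_
  · rintro ⟨Z, x⟩ hp
    rw [Finset.mem_sigma] at hp
    obtain ⟨hZ, hx⟩ := hp
    rw [mem_lev] at hZ
    rw [Finset.mem_sigma, mem_lev]
    refine ⟨⟨(Finset.erase_subset _ _).trans hZ.1, ?_⟩, ?_⟩
    · rw [Finset.card_erase_of_mem hx, hZ.2]; omega
    · exact Finset.mem_sdiff.mpr ⟨hZ.1 hx, Finset.notMem_erase _ _⟩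
  · rintro ⟨Y, v⟩ hp
    rw [Finset.mem_sigma] at hp
    obtain ⟨hY, hv⟩ := hp
    rw [mem_lev] at hY
    rw [Finset.mem_sdiff] at hv
    rw [Finset.mem_sigma, mem_lev]
    refine ⟨⟨Finset.insert_subset hv.1 hY.1, ?_⟩, Finset.mem_insert_self _ _⟩
    rw [Finset.card_insert_of_notMem hv.2, hY.2]
  · rintro ⟨Z, x⟩ hp
    rw [Finset.mem_sigma] at hp
    simp only [Finset.insert_erase hp.2]
  · rintro ⟨Y, v⟩ hp
    rw [Finset.mem_sigma, Finset.mem_sdiff] at hp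
    simp only [Finset.erase_insert hp.2.2]
  · rintro ⟨Z, x⟩ hp
    rw [Finset.mem_sigma] at hp
    simp only [Finset.insert_erase hp.2]

lemma DUop_eq (T : Finset ℕ) (f : Finset ℕ → Fin d → ℤ) (Y : Finset ℕ) :
    Dop T (Uop f) Y = ((T \ Y).card : ℤ) • f Y
      + ∑ v ∈ T \ Y, ∑ x ∈ Y, f (insert v (Y.erase x)) := by
  classical
  rw [Dop]
  have step : ∀ v ∈ T \ Y, Uop f (insert v Y)
      = f Y + ∑ x ∈ Y, f (insert v (Y.erase x)) := by
    intro v hv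
    have hvY : v ∉ Y := (Finset.mem_sdiff.mp hv).2
    rw [Uop, Finset.sum_insert hvY, Finset.erase_insert hvY]
    congr 1
    refine Finset.sum_congr rfl fun x hx => ?_
    rw [Finset.erase_insert_of_ne]
    intro h
    exact hvY (h ▸ hx)
  rw [Finset.sum_congr rfl step, Finset.sum_add_distrib, Finset.sum_const,
    Nat.cast_smul_eq_nsmul]

lemma UDop_eq (T : Finset ℕ) (f : Finset ℕ → Fin d → ℤ) {Y : Finset ℕ} (hY : Y ⊆ T) :
    Uop (Dop T f) Y = (Y.card : ℤ) • f Y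
      + ∑ x ∈ Y, ∑ v ∈ T \ Y, f (insert v (Y.erase x)) := by
  classical
  rw [Uop]
  have step : ∀ x ∈ Y, Dop T f (Y.erase x)
      = f Y + ∑ v ∈ T \ Y, f (insert v (Y.erase x)) := by
    intro x hx
    rw [Dop, Finset.sdiff_erase (hY hx), Finset.sum_insert (by
      rw [Finset.mem_sdiff]; exact fun h => h.2 hx), Finset.insert_erase hx]
  rw [Finset.sum_congr rfl step, Finset.sum_add_distrib, Finset.sum_const,
    Nat.cast_smul_eq_nsmul]

/-- **Injectivity below the middle layer.** -/
theorem inj_small {r : ℕ} {T : Finset ℕ} (hn : T.card < 2 * r)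
    (f : Finset ℕ → Fin d → ℤ)
    (hsupp : ∀ Y, f Y ≠ 0 → Y ⊆ T ∧ Y.card = r)
    (hclosed : ∀ Z : Finset ℕ, Z ⊆ T → Z.card + 1 = r → Dop T f Z = 0) :
    ∀ Y, f Y = 0 := by
  classical
  have hr : 1 ≤ r := by omega
  by_cases hrT : r ≤ T.card
  case neg =>
    intro Y
    by_contra hne
    obtain ⟨h1, h2⟩ := hsupp Y hne
    exact hrT (h2 ▸ Finset.card_le_card h1)
  case pos =>
  have hU0 : ∀ Y ∈ lev T r, Uop (Dop T f) Y = 0 := by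
    intro Y hY
    rw [mem_lev] at hY
    rw [Uop]
    refine Finset.sum_eq_zero fun x hx => ?_
    refine hclosed _ ((Finset.erase_subset _ _).trans hY.1) ?_
    rw [Finset.card_erase_of_mem hx, hY.2]
    omega
  have key : ∀ Y ∈ lev T r, inn (f Y) (Dop T (Uop f) Y)
      = ((T.card : ℤ) - 2 * r) * inn (f Y) (f Y) := by
    intro Y hY
    rw [mem_lev] at hY
    have h1 := DUop_eq T f Y
    have h2 := UDop_eq T f (Y := Y) hY.1
    have h3 : Dop T (Uop f) Y = (((T \ Y).card : ℤ) - (Y.card : ℤ)) • f Y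
        + Uop (Dop T f) Y := by
      have hswap : ∑ v ∈ T \ Y, ∑ x ∈ Y, f (insert v (Y.erase x))
          = ∑ x ∈ Y, ∑ v ∈ T \ Y, f (insert v (Y.erase x)) := Finset.sum_comm
      rw [h1, hswap, h2, sub_smul]
      abel
    rw [h3, hU0 Y (mem_lev.mpr hY), add_zero, inn_smul_right]
    have hcards : ((T \ Y).card : ℤ) - (Y.card : ℤ) = (T.card : ℤ) - 2 * r := by
      rw [Finset.card_sdiff_of_subset hY.1, hY.2]
      have : r ≤ T.card := hrT
      push_cast [Nat.cast_sub this]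
      ring
    rw [hcards]
  have hA : 0 ≤ ∑ Z ∈ lev T (r+1), inn (Uop f Z) (Uop f Z) :=
    Finset.sum_nonneg fun Z _ => inn_self_nonneg _
  rw [adjoint T r f (Uop f)] at hA
  rw [Finset.sum_congr rfl key, ← Finset.mul_sum] at hA
  have hB : 0 ≤ ∑ Y ∈ lev T r, inn (f Y) (f Y) :=
    Finset.sum_nonneg fun Y _ => inn_self_nonneg _
  have hc : (T.card : ℤ) - 2 * r < 0 := by
    have : (T.card : ℤ) < 2 * r := by exact_mod_cast hn
    omega
  have hzero : ∑ Y ∈ lev T r, inn (f Y) (f Y) = 0 := by nlinarith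
  intro Y
  by_cases hmem : Y ∈ lev T r
  · refine inn_self_eq_zero ?_
    exact (Finset.sum_eq_zero_iff_of_nonneg (fun Z _ => inn_self_nonneg (f Z))).mp
      hzero Y hmem
  · by_contra hne
    exact hmem (mem_lev.mpr (hsupp Y hne))

end Specht
section FullSpan

open Finset

variable {d : ℕ}

/-- Data of one signed polytabloid: coefficient vector and the two vertex tuples. -/
structure PTdat (r d : ℕ) where
  a : Fin d → ℤ
  al : Fin r → ℕ
  be : Fin r → ℕ

/-- Evaluation of a signed polytabloid at a set. -/
def PTeval {r d : ℕ} (p : PTdat r d) (Y : Finset ℕ) : Fin d → ℤ := pt p.al p.be Y • p.a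

/-- Well-formedness of a polytabloid w.r.t. a ground set and coefficient module. -/
def PTok {r d : ℕ} (T : Finset ℕ) (M : Submodule ℤ (Fin d → ℤ)) (p : PTdat r d) : Prop :=
  p.a ∈ M ∧ Function.Injective (Sum.elim p.al p.be) ∧ ∀ i, p.al i ∈ T ∧ p.be i ∈ T

lemma pt_fin_zero (α β : Fin 0 → ℕ) (Y : Finset ℕ) :
    pt α β Y = if Y = ∅ then 1 else 0 := by
  rw [pt, Fintype.sum_unique]
  have h1 : ∀ χ : Fin 0 → Bool, mixed α β χ = ∅ := fun χ => by rw [mixed]; simp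
  have h2 : ∀ χ : Fin 0 → Bool, ptSign χ = 1 := fun χ => by rw [ptSign]; simp
  rw [h1, h2]

lemma finsum_listsum {X : Type*} (s : Finset ℕ) (l : List X) (g : X → ℕ → Fin d → ℤ) :
    ∑ v ∈ s, (l.map (fun p => g p v)).sum = (l.map (fun p => ∑ v ∈ s, g p v)).sum := by
  induction l with
  | nil => simp
  | cons p l ih => simp [List.map_cons, List.sum_cons, Finset.sum_add_distrib, ih]

/-- **Full spanning theorem**: every `Dop`-closed function supported on `r`-subsets
of `T` is an integer combination of signed polytabloids over `T`. -/
theorem full_span (N : ℕ) : ∀ (r : ℕ) (T : Finset ℕ) (f : Finset ℕ → Fin d → ℤ),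
    r + T.card ≤ N →
    (∀ Y, f Y ≠ 0 → Y ⊆ T ∧ Y.card = r) →
    (∀ Z ⊆ T, Z.card + 1 = r → Dop T f Z = 0) →
    ∃ L : List (PTdat r d),
      (∀ p ∈ L, PTok T (Submodule.span ℤ (Set.range f)) p) ∧
      ∀ Y, f Y = (L.map (fun p => PTeval p Y)).sum := by
  classical
  induction N using Nat.strong_induction_on with
  | _ N IH =>
  intro r T f hN hsupp hclosed
  match r with
  | 0 =>
    refine ⟨[⟨f ∅, Fin.elim0, Fin.elim0⟩], ?_, ?_⟩
    · rintro p hp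
      rw [List.mem_singleton] at hp
      subst hp
      refine ⟨Submodule.subset_span ⟨∅, rfl⟩, ?_, fun i => i.elim0⟩
      intro x y _
      cases x with
      | inl i => exact i.elim0
      | inr i => exact i.elim0
    · intro Y
      simp only [List.map_cons, List.map_nil, List.sum_cons, List.sum_nil, add_zero, PTeval]
      rw [pt_fin_zero]
      by_cases hY : Y = ∅
      · subst hY; simp
      · rw [if_neg hY, zero_smul]
        by_contra hne
        exact hY (Finset.card_eq_zero.mp (hsupp Y hne).2)
  | (r' + 1) =>
  by_cases hsmall : T.card < 2 * (r' + 1)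
  · -- small ground: f is identically zero
    have h0 := inj_small hsmall f hsupp hclosed
    exact ⟨[], by simp, fun Y => by simp [h0 Y]⟩
  · push_neg at hsmall
    have hTne : T.Nonempty := Finset.card_pos.mp (by omega)
    obtain ⟨t, ht⟩ := hTne
    set T' := T.erase t with hT'
    have hT'sub : T' ⊆ T := Finset.erase_subset _ _
    have hT'card : T'.card = T.card - 1 := Finset.card_erase_of_mem ht
    have htT' : t ∉ T' := Finset.notMem_erase _ _
    set u : Finset ℕ → Fin d → ℤ := fun Q => if t ∈ Q then 0 else f (insert t Q) with hu
    have husupp : ∀ Q, u Q ≠ 0 → Q ⊆ T' ∧ Q.card = r' := by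
      intro Q hQ
      rw [hu] at hQ
      simp only at hQ
      by_cases htQ : t ∈ Q
      · rw [if_pos htQ] at hQ; exact absurd rfl hQ
      · rw [if_neg htQ] at hQ
        obtain ⟨hsub, hcard⟩ := hsupp _ hQ
        constructor
        · intro q hq
          rw [hT', Finset.mem_erase]
          exact ⟨fun h => htQ (h ▸ hq), hsub (Finset.mem_insert_of_mem hq)⟩
        · rw [Finset.card_insert_of_notMem htQ] at hcard
          omega
    have huclosed : ∀ Z ⊆ T', Z.card + 1 = r' → Dop T' u Z = 0 := by
      intro Z hZ hZc
      have htZ : t ∉ Z := fun h => htT' (hZ h)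
      have hstep : Dop T' u Z = Dop T f (insert t Z) := by
        rw [Dop, Dop]
        have hsets : T \ insert t Z = T' \ Z := by
          ext v
          simp only [Finset.mem_sdiff, Finset.mem_insert, hT', Finset.mem_erase]
          tauto
        rw [hsets]
        refine Finset.sum_congr rfl fun v hv => ?_
        have hvZ : v ∉ Z := (Finset.mem_sdiff.mp hv).2
        have hvt : v ≠ t := by
          have := (Finset.mem_sdiff.mp hv).1
          rw [hT', Finset.mem_erase] at this
          exact this.1
        have htvZ : t ∉ insert v Z := by
          rw [Finset.mem_insert]
          rintro (h | h)
          · exact hvt h.symm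
          · exact htZ h
        rw [hu]
        simp only [if_neg htvZ]
        rw [Finset.insert_comm]
      rw [hstep]
      refine hclosed _ ?_ ?_
      · exact Finset.insert_subset ht (hZ.trans hT'sub)
      · rw [Finset.card_insert_of_notMem htZ]
        omega
    obtain ⟨Lu, hLuok, hLueval⟩ := IH (r' + T'.card) (by omega) r' T' u (le_refl _)
      husupp huclosed
    -- choose the fresh extension vertex for each polytabloid
    set used : PTdat r' d → Finset ℕ :=
      fun p => Finset.image p.al Finset.univ ∪ Finset.image p.be Finset.univ with hused
    set cfun : PTdat r' d → ℕ := fun p =>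
      if h : (T' \ used p).Nonempty then (T' \ used p).min' h else 0 with hcfun
    have hcmem : ∀ p : PTdat r' d, cfun p ∈ T' \ used p ∨ ¬(T' \ used p).Nonempty := by
      intro p
      rw [hcfun]
      by_cases h : (T' \ used p).Nonempty
      · left; simp only [dif_pos h]; exact Finset.min'_mem _ h
      · right; exact h
    have hcne : ∀ p ∈ Lu, cfun p ∈ T' ∧ cfun p ∉ used p := by
      intro p hp
      have hne : (T' \ used p).Nonempty := by
        rw [← Finset.card_pos]
        have h1 : (used p).card ≤ 2 * r' := by
          rw [hused]
          calc (Finset.image p.al Finset.univ ∪ Finset.image p.be Finset.univ).card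
              ≤ (Finset.image p.al Finset.univ).card + (Finset.image p.be Finset.univ).card :=
                Finset.card_union_le _ _
            _ ≤ 2 * r' := by
                have := Finset.card_image_le (s := (Finset.univ : Finset (Fin r'))) (f := p.al)
                have := Finset.card_image_le (s := (Finset.univ : Finset (Fin r'))) (f := p.be)
                simp only [Finset.card_univ, Fintype.card_fin] at *
                omega
        have h2 := Finset.le_card_sdiff (used p) T'
        omega
      rcases hcmem p with h | h
      · exact ⟨(Finset.mem_sdiff.mp h).1, (Finset.mem_sdiff.mp h).2⟩
      · exact absurd hne h
    set ext : PTdat r' d → PTdat (r' + 1) d :=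
      fun p => ⟨p.a, Fin.cons t p.al, Fin.cons (cfun p) p.be⟩ with hext
    set L₁ : List (PTdat (r' + 1) d) := Lu.map ext with hL₁
    set w' : Finset ℕ → Fin d → ℤ :=
      fun Y => f Y - (L₁.map (fun p => PTeval p Y)).sum with hw'
    -- basic facts about the vertices of members of Lu
    have hfacts : ∀ p ∈ Lu, (∀ i, t ≠ p.al i) ∧ (∀ i, t ≠ p.be i) ∧
        (∀ i, cfun p ≠ p.al i) ∧ (∀ i, cfun p ≠ p.be i) ∧ t ≠ cfun p := by
      intro p hp
      obtain ⟨-, -, hpT⟩ := hLuok p hp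
      obtain ⟨hc1, hc2⟩ := hcne p hp
      refine ⟨fun i h => htT' (h ▸ (hpT i).1), fun i h => htT' (h ▸ (hpT i).2),
        fun i h => ?_, fun i h => ?_, fun h => htT' (h ▸ hc1)⟩
      · exact hc2 (by rw [hused, Finset.mem_union]; left
                      exact Finset.mem_image.mpr ⟨i, Finset.mem_univ _, h.symm⟩)
      · exact hc2 (by rw [hused, Finset.mem_union]; right
                      exact Finset.mem_image.mpr ⟨i, Finset.mem_univ _, h.symm⟩)
    have hinj' : ∀ p ∈ Lu, Function.Injective (Sum.elim (Fin.cons t p.al)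
        (Fin.cons (cfun p) p.be : Fin (r'+1) → ℕ)) := by
      intro p hp
      obtain ⟨h1, h2, h3, h4, h5⟩ := hfacts p hp
      obtain ⟨-, hpinj, -⟩ := hLuok p hp
      exact injective_cons hpinj h1 h2
        (fun i h => h3 i h) (fun i h => h4 i h) h5
    -- (Ea): on sets containing t, the extended list reproduces f
    have hEa : ∀ Y : Finset ℕ, t ∈ Y → (L₁.map (fun p => PTeval p Y)).sum = f Y := by
      intro Y htY
      rw [hL₁, List.map_map]
      have hcong : ∀ p ∈ Lu, (((fun p => PTeval p Y) ∘ ext) p) = PTeval p (Y.erase t) := by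
        intro p hp
        obtain ⟨h1, h2, h3, h4, h5⟩ := hfacts p hp
        show PTeval (ext p) Y = PTeval p (Y.erase t)
        rw [hext]
        show pt (Fin.cons t p.al) (Fin.cons (cfun p) p.be) Y • p.a = PTeval p (Y.erase t)
        rw [pt_cons_of_mem h1 h2 h5 htY]
        rfl
      rw [List.map_congr_left hcong, ← hLueval (Y.erase t)]
      show (if t ∈ Y.erase t then 0 else f (insert t (Y.erase t))) = f Y
      rw [if_neg (Finset.notMem_erase _ _), Finset.insert_erase htY]
    -- vertices of extended polytabloids lie in T
    have hvertsT : ∀ p ∈ Lu, ∀ i : Fin (r'+1),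
        (Fin.cons t p.al : Fin (r'+1) → ℕ) i ∈ T ∧
        (Fin.cons (cfun p) p.be : Fin (r'+1) → ℕ) i ∈ T := by
      intro p hp i
      obtain ⟨-, -, hpT⟩ := hLuok p hp
      obtain ⟨hc1, -⟩ := hcne p hp
      induction i using Fin.cases with
      | zero => exact ⟨by simpa using ht, by simpa using hT'sub hc1⟩
      | succ j => exact ⟨by simpa using hT'sub (hpT j).1, by simpa using hT'sub (hpT j).2⟩
    -- (Eb): support of w'
    have hEb : ∀ Y, w' Y ≠ 0 → Y ⊆ T' ∧ Y.card = r' + 1 := by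
      intro Y hne
      by_cases htY : t ∈ Y
      · exfalso
        apply hne
        show f Y - (L₁.map (fun p => PTeval p Y)).sum = 0
        rw [hEa Y htY, sub_self]
      · have hYT : Y ⊆ T ∧ Y.card = r' + 1 := by
          by_cases hf : f Y = 0
          · have hsum : (L₁.map (fun p => PTeval p Y)).sum ≠ 0 := by
              intro h
              apply hne
              show f Y - (L₁.map (fun p => PTeval p Y)).sum = 0
              rw [hf, h, sub_zero]
            have hex : ∃ p ∈ Lu, PTeval (ext p) Y ≠ 0 := by
              by_contra hall
              push_neg at hall
              apply hsum
              rw [hL₁, List.map_map]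
              apply List.sum_eq_zero
              intro x hx
              rw [List.mem_map] at hx
              obtain ⟨p, hp, rfl⟩ := hx
              exact hall p hp
            obtain ⟨p, hp, hpne⟩ := hex
            have hptne : pt (Fin.cons t p.al) (Fin.cons (cfun p) p.be) Y ≠ 0 := by
              intro h
              apply hpne
              show pt (Fin.cons t p.al) (Fin.cons (cfun p) p.be) Y • p.a = 0
              rw [h, zero_smul]
            obtain ⟨χ, hχ⟩ := pt_ne_zero_imp hptne
            constructor
            · rw [hχ]
              exact mixed_subset (hvertsT p hp) χ
            · rw [hχ]
              exact card_mixed (hinj' p hp) χ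
          · exact hsupp Y hf
        exact ⟨fun y hy => Finset.mem_erase.mpr ⟨fun h => htY (h ▸ hy), hYT.1 hy⟩, hYT.2⟩
    -- (Ec): closedness of w' on T', via closedness on T
    have hEc0 : ∀ Z ⊆ T, Z.card + 1 = r' + 1 → Dop T w' Z = 0 := by
      intro Z hZ hZc
      rw [Dop]
      have hterm : ∀ v ∈ T \ Z, w' (insert v Z) = f (insert v Z)
          - (L₁.map (fun p => PTeval p (insert v Z))).sum := fun v _ => rfl
      rw [Finset.sum_congr rfl hterm, Finset.sum_sub_distrib]
      have h1 : ∑ v ∈ T \ Z, f (insert v Z) = 0 := hclosed Z hZ hZc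
      rw [h1, zero_sub, neg_eq_zero]
      rw [finsum_listsum (T \ Z) L₁ (fun p v => PTeval p (insert v Z))]
      apply List.sum_eq_zero
      intro x hx
      rw [List.mem_map] at hx
      obtain ⟨q, hq, rfl⟩ := hx
      rw [hL₁, List.mem_map] at hq
      obtain ⟨p, hp, rfl⟩ := hq
      show ∑ v ∈ T \ Z, pt (Fin.cons t p.al) (Fin.cons (cfun p) p.be) (insert v Z) • p.a = 0
      rw [← Finset.sum_smul, pt_closure (hinj' p hp) hZc (hvertsT p hp), zero_smul]
    have hEc : ∀ Z ⊆ T', Z.card + 1 = r' + 1 → Dop T' w' Z = 0 := by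
      intro Z hZ hZc
      have htZ : t ∉ Z := fun h => htT' (hZ h)
      have hsets : T \ Z = insert t (T' \ Z) := by
        ext v
        simp only [Finset.mem_sdiff, Finset.mem_insert, hT', Finset.mem_erase]
        constructor
        · rintro ⟨hvT, hvZ⟩
          by_cases hvt : v = t
          · left; exact hvt
          · right; exact ⟨⟨hvt, hvT⟩, hvZ⟩
        · rintro (rfl | ⟨⟨hvt, hvT⟩, hvZ⟩)
          · exact ⟨ht, htZ⟩
          · exact ⟨hvT, hvZ⟩
      have h0 : Dop T w' Z = 0 := hEc0 Z (hZ.trans hT'sub) hZc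
      rw [Dop, hsets, Finset.sum_insert (by
        rw [Finset.mem_sdiff]; exact fun h => htT' h.1)] at h0
      have hw't : w' (insert t Z) = 0 := by
        show f (insert t Z) - (L₁.map (fun p => PTeval p (insert t Z))).sum = 0
        rw [hEa _ (Finset.mem_insert_self _ _), sub_self]
      rw [hw't, zero_add] at h0
      exact h0
    -- apply the induction hypothesis to w'
    have hNbound : (r' + 1) + T'.card < N := by omega
    obtain ⟨L₂, hL₂ok, hL₂eval⟩ := IH ((r'+1) + T'.card) hNbound (r'+1) T' w' (le_refl _)
      hEb hEc
    have hspanu : Submodule.span ℤ (Set.range u) ≤ Submodule.span ℤ (Set.range f) := by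
      rw [Submodule.span_le]
      rintro x ⟨Q, rfl⟩
      show u Q ∈ _
      by_cases h : t ∈ Q
      · show (if t ∈ Q then 0 else f (insert t Q)) ∈ _
        rw [if_pos h]; exact Submodule.zero_mem _
      · show (if t ∈ Q then 0 else f (insert t Q)) ∈ _
        rw [if_neg h]; exact Submodule.subset_span ⟨_, rfl⟩
    refine ⟨L₁ ++ L₂, ?_, ?_⟩
    · intro p hp
      rw [List.mem_append] at hp
      rcases hp with hp | hp
      · rw [hL₁, List.mem_map] at hp
        obtain ⟨p₀, hp₀, rfl⟩ := hp
        obtain ⟨hpa, -, -⟩ := hLuok p₀ hp₀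
        exact ⟨hspanu hpa, hinj' p₀ hp₀, hvertsT p₀ hp₀⟩
      · obtain ⟨hqa, hqinj, hqT⟩ := hL₂ok p hp
        refine ⟨?_, hqinj, fun i => ⟨hT'sub (hqT i).1, hT'sub (hqT i).2⟩⟩
        have hspan : Submodule.span ℤ (Set.range w') ≤ Submodule.span ℤ (Set.range f) := by
          rw [Submodule.span_le]
          rintro x ⟨Y, rfl⟩
          show w' Y ∈ _
          show f Y - (L₁.map (fun p => PTeval p Y)).sum ∈ _
          apply sub_mem
          · exact Submodule.subset_span ⟨Y, rfl⟩
          · apply list_sum_mem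
            intro x hx
            rw [List.mem_map] at hx
            obtain ⟨q, hq, rfl⟩ := hx
            rw [hL₁, List.mem_map] at hq
            obtain ⟨p₀, hp₀, rfl⟩ := hq
            show pt (Fin.cons t p₀.al) (Fin.cons (cfun p₀) p₀.be) Y • p₀.a ∈ _
            exact Submodule.smul_mem _ _ (hspanu (hLuok p₀ hp₀).1)
        exact hspan hqa
    · intro Y
      have h2 : w' Y = (L₂.map (fun p => PTeval p Y)).sum := hL₂eval Y
      rw [List.map_append, List.sum_append, ← h2]
      show f Y = (L₁.map (fun p => PTeval p Y)).sum
        + (f Y - (L₁.map (fun p => PTeval p Y)).sum)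
      abel

end FullSpan
section Rename

open Finset

variable {d : ℕ}

/-- Extend a finite partial injection to a permutation of `ℕ`. -/
lemma exists_perm_extend {γ : Type} [Fintype γ] (src tgt : γ → ℕ)
    (hs : Function.Injective src) (ht : Function.Injective tgt) :
    ∃ π : ℕ ≃ ℕ, ∀ x, π (src x) = tgt x := by
  classical
  have hsinf : (Set.range src)ᶜ.Infinite := (Set.finite_range _).infinite_compl
  have htinf : (Set.range tgt)ᶜ.Infinite := (Set.finite_range _).infinite_compl
  haveI : Infinite ↥(Set.range src)ᶜ := hsinf.to_subtype
  haveI : Infinite ↥(Set.range tgt)ᶜ := htinf.to_subtype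
  haveI := Encodable.ofCountable ↥(Set.range src)ᶜ
  haveI := Encodable.ofCountable ↥(Set.range tgt)ᶜ
  haveI := Denumerable.ofEncodableOfInfinite ↥(Set.range src)ᶜ
  haveI := Denumerable.ofEncodableOfInfinite ↥(Set.range tgt)ᶜ
  let eC : ↥(Set.range src)ᶜ ≃ ↥(Set.range tgt)ᶜ :=
    (Denumerable.eqv _).trans (Denumerable.eqv _).symm
  let e1 : ↥(Set.range src) ≃ ↥(Set.range tgt) :=
    (Equiv.ofInjective src hs).symm.trans (Equiv.ofInjective tgt ht)
  refine ⟨(Equiv.Set.sumCompl (Set.range src)).symm.trans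
    ((e1.sumCongr eC).trans (Equiv.Set.sumCompl (Set.range tgt))), fun x => ?_⟩
  simp only [Equiv.trans_apply]
  rw [Equiv.Set.sumCompl_symm_apply_of_mem (Set.mem_range_self x)]
  rw [Equiv.sumCongr_apply]
  simp only [Sum.map_inl, Equiv.Set.sumCompl_apply_inl]
  show ((e1 ⟨src x, Set.mem_range_self x⟩ : ↥(Set.range tgt)) : ℕ) = tgt x
  have h1 : (⟨src x, Set.mem_range_self x⟩ : ↥(Set.range src))
      = Equiv.ofInjective src hs x := by
    rw [Equiv.ofInjective_apply]
  show ((Equiv.ofInjective tgt ht) ((Equiv.ofInjective src hs).symm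
    ⟨src x, Set.mem_range_self x⟩) : ℕ) = tgt x
  rw [h1, Equiv.symm_apply_apply, Equiv.ofInjective_apply]

/-- Injectivity of a triple sum-elim from pieces. -/
lemma inj3 {n₁ n₂ n₃ : ℕ} {f : Fin n₁ → ℕ} {g : Fin n₂ → ℕ} {h : Fin n₃ → ℕ}
    (hf : Function.Injective f) (hg : Function.Injective g) (hh : Function.Injective h)
    (hfg : ∀ i j, f i ≠ g j) (hfh : ∀ i j, f i ≠ h j) (hgh : ∀ i j, g i ≠ h j) :
    Function.Injective (Sum.elim f (Sum.elim g h)) := by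
  intro x y hxy
  rcases x with i | (i | i) <;> rcases y with j | (j | j) <;> simp only [Sum.elim_inl,
    Sum.elim_inr] at hxy <;>
    first
      | (exact congrArg Sum.inl (hf hxy))
      | (exact congrArg (Sum.inr ∘ Sum.inl) (hg hxy))
      | (exact congrArg (Sum.inr ∘ Sum.inr) (hh hxy))
      | (exact absurd hxy (hfg _ _))
      | (exact absurd hxy.symm (hfg _ _))
      | (exact absurd hxy (hfh _ _))
      | (exact absurd hxy.symm (hfh _ _))
      | (exact absurd hxy (hgh _ _))
      | (exact absurd hxy.symm (hgh _ _))

/-- Any `(m+1, a)`-simple hypergraph has an equivalent copy whose `A`/`B` vertices are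
any prescribed tuples and whose remaining vertices stay inside `W`. -/
lemma exists_renamed_simple {k m : ℕ} (hm : m < k) (S : Set (HG d))
    (W : Finset ℕ) (hW : 2 * k ≤ W.card)
    (a : Fin d → ℤ) (G₀ : HG d) (hG₀S : G₀ ∈ S) (hsimple : IsSimple k (m+1) a G₀)
    (al be : Fin (m+1) → ℕ) (hinj : Function.Injective (Sum.elim al be))
    (hverts : ∀ i, al i ∈ W ∧ be i ∈ W) :
    ∃ F : HG d, F ∈ Eqs S ∧ verts F ⊆ W ∧
      (∀ Y : Finset ℕ, Y.card ≤ m → weight Y F = 0) ∧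
      (∀ Y : Finset ℕ, Y.card = m + 1 → weight Y F = pt al be Y • a) := by
  classical
  obtain ⟨A, B, C, α₀, β₀, hα₀, hβ₀, hA, hB, hAB, hAC, hBC, hCcard, hvG₀, h1, h2, h3⟩ :=
    hsimple
  obtain ⟨halinj, hbeinj, halbe⟩ := sum_elim_inj_iff.mp hinj
  -- the target images of A and B
  set A' : Finset ℕ := Finset.image al Finset.univ with hA'
  set B' : Finset ℕ := Finset.image be Finset.univ with hB'
  -- choose C' ⊆ W \ (A' ∪ B') with the same cardinality as C
  have hABcard : (A' ∪ B').card ≤ 2 * (m + 1) := by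
    calc (A' ∪ B').card ≤ A'.card + B'.card := Finset.card_union_le _ _
      _ ≤ 2 * (m + 1) := by
          have h1' : A'.card ≤ m + 1 := by
            rw [hA']
            simpa using Finset.card_image_le
              (s := (Finset.univ : Finset (Fin (m+1)))) (f := al)
          have h2' : B'.card ≤ m + 1 := by
            rw [hB']
            simpa using Finset.card_image_le
              (s := (Finset.univ : Finset (Fin (m+1)))) (f := be)
          omega
  have hroom : C.card ≤ (W \ (A' ∪ B')).card := by
    have hub : (A' ∪ B').card ≤ 2 * (m + 1) := hABcard
    have hsd : W.card - (A' ∪ B').card ≤ (W \ (A' ∪ B')).card :=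
      Finset.le_card_sdiff (A' ∪ B') W
    have hCc : C.card = 2 * (k - (m+1)) - 1 := hCcard
    have hmk : m + 1 ≤ k := hm
    have hWc : 2 * k ≤ W.card := hW
    omega
  obtain ⟨C', hC'sub, hC'card⟩ := Finset.exists_subset_card_eq hroom
  have hC'W : C' ⊆ W := hC'sub.trans (Finset.sdiff_subset)
  have hC'AB : ∀ x ∈ C', x ∉ A' ∪ B' := fun x hx =>
    (Finset.mem_sdiff.mp (hC'sub hx)).2
  -- enumerations of C and C'
  set cn := C.card with hcn
  let eC : ↥C ≃ Fin cn := C.equivFin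
  let eC' : ↥C' ≃ Fin cn := Finset.equivFinOfCardEq hC'card
  set src : Fin (m+1) ⊕ (Fin (m+1) ⊕ Fin cn) → ℕ :=
    Sum.elim α₀ (Sum.elim β₀ (fun j => ((eC.symm j : ↥C) : ℕ))) with hsrc
  set tgt : Fin (m+1) ⊕ (Fin (m+1) ⊕ Fin cn) → ℕ :=
    Sum.elim al (Sum.elim be (fun j => ((eC'.symm j : ↥C') : ℕ))) with htgt
  have hmemA : ∀ i, α₀ i ∈ A := fun i => by
    rw [hA]; exact Finset.mem_image_of_mem _ (Finset.mem_univ i)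
  have hmemB : ∀ i, β₀ i ∈ B := fun i => by
    rw [hB]; exact Finset.mem_image_of_mem _ (Finset.mem_univ i)
  have hCenum_inj : Function.Injective (fun j : Fin cn => ((eC.symm j : ↥C) : ℕ)) := by
    intro i j hij
    have := Subtype.ext hij (p := (· ∈ C))
    exact eC.symm.injective this
  have hC'enum_inj : Function.Injective (fun j : Fin cn => ((eC'.symm j : ↥C') : ℕ)) := by
    intro i j hij
    have := Subtype.ext hij (p := (· ∈ C'))
    exact eC'.symm.injective this
  have hsrc_inj : Function.Injective src := by
    rw [hsrc]
    apply inj3 hα₀ hβ₀ hCenum_inj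
    · intro i j h
      exact Finset.disjoint_left.mp hAB (h ▸ hmemA i) (hmemB j)
    · intro i j h
      exact Finset.disjoint_left.mp hAC (h ▸ hmemA i) (eC.symm j).2
    · intro i j h
      exact Finset.disjoint_left.mp hBC (h ▸ hmemB i) (eC.symm j).2
  have hmemA' : ∀ i, al i ∈ A' := fun i => Finset.mem_image_of_mem _ (Finset.mem_univ i)
  have hmemB' : ∀ i, be i ∈ B' := fun i => Finset.mem_image_of_mem _ (Finset.mem_univ i)
  have htgt_inj : Function.Injective tgt := by
    rw [htgt]
    apply inj3 halinj hbeinj hC'enum_inj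
    · exact halbe
    · intro i j h
      exact hC'AB _ (eC'.symm j).2 (Finset.mem_union_left _ (h ▸ hmemA' i))
    · intro i j h
      exact hC'AB _ (eC'.symm j).2 (Finset.mem_union_right _ (h ▸ hmemB' i))
  obtain ⟨π, hπ⟩ := exists_perm_extend src tgt hsrc_inj htgt_inj
  have hπα : ∀ i, π (α₀ i) = al i := fun i => hπ (Sum.inl i)
  have hπβ : ∀ i, π (β₀ i) = be i := fun i => hπ (Sum.inr (Sum.inl i))
  have hπC : ∀ c ∈ C, π c ∈ C' := by
    intro c hc
    have := hπ (Sum.inr (Sum.inr (eC ⟨c, hc⟩)))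
    rw [hsrc] at this
    simp only [Sum.elim_inr, Equiv.symm_apply_apply] at this
    rw [htgt] at this
    simp only [Sum.elim_inr] at this
    rw [this]
    exact (eC'.symm (eC ⟨c, hc⟩)).2
  set F : HG d := mapHG π G₀ with hF
  -- image of the support region
  have himg : (A ∪ B ∪ C).image π ⊆ A' ∪ B' ∪ C' := by
    intro y hy
    obtain ⟨x, hx, rfl⟩ := Finset.mem_image.mp hy
    rcases Finset.mem_union.mp hx with hx' | hxC
    · rcases Finset.mem_union.mp hx' with hxA | hxB
      · rw [hA] at hxA
        obtain ⟨i, -, rfl⟩ := Finset.mem_image.mp hxA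
        rw [hπα]
        exact Finset.mem_union_left _ (Finset.mem_union_left _ (hmemA' i))
      · rw [hB] at hxB
        obtain ⟨i, -, rfl⟩ := Finset.mem_image.mp hxB
        rw [hπβ]
        exact Finset.mem_union_left _ (Finset.mem_union_right _ (hmemB' i))
    · exact Finset.mem_union_right _ (hπC _ hxC)
  have hvertsF : verts F ⊆ A' ∪ B' ∪ C' := by
    rw [hF, verts_mapHG]
    exact (Finset.image_subset_image hvG₀).trans himg
  have hvertsFW : verts F ⊆ W := by
    refine hvertsF.trans ?_
    intro x hx
    rcases Finset.mem_union.mp hx with hx' | hxC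
    · rcases Finset.mem_union.mp hx' with hxA | hxB
      · obtain ⟨i, -, rfl⟩ := Finset.mem_image.mp hxA
        exact (hverts i).1
      · obtain ⟨i, -, rfl⟩ := Finset.mem_image.mp hxB
        exact (hverts i).2
    · exact hC'W hxC
  -- mixed sets commute with renaming
  have hmixed_img : ∀ χ : Fin (m+1) → Bool,
      (mixed α₀ β₀ χ).image π = mixed al be χ := by
    intro χ
    rw [mixed, mixed, Finset.image_image]
    apply Finset.image_congr
    intro i _
    show π (if χ i then β₀ i else α₀ i) = _
    by_cases hi : χ i <;> simp [hi, hπα, hπβ]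
  refine ⟨F, ⟨G₀, hG₀S, hgEquiv_mapHG π G₀⟩, hvertsFW, ?_, ?_⟩
  · -- low weights vanish
    intro Y hY
    by_cases hsub : Y ⊆ verts F
    · have hYimg : (Y.image π.symm).image π = Y := by
        rw [Finset.image_image]
        simp
      have hY₀sub : Y.image π.symm ⊆ A ∪ B ∪ C := by
        intro x hx
        obtain ⟨y, hy, rfl⟩ := Finset.mem_image.mp hx
        have hy' : y ∈ (A ∪ B ∪ C).image π := by
          have : y ∈ verts G₀ → y ∈ A ∪ B ∪ C → True := fun _ _ => trivial
          have hyv : y ∈ verts F := hsub hy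
          rw [hF, verts_mapHG] at hyv
          obtain ⟨z, hz, rfl⟩ := Finset.mem_image.mp hyv
          exact Finset.mem_image_of_mem _ (hvG₀ hz)
        obtain ⟨z, hz, hzeq⟩ := Finset.mem_image.mp hy'
        have : π.symm y = z := by rw [← hzeq]; simp
        rw [this]; exact hz
      rw [hF, weight_mapHG']
      refine h3 _ hY₀sub ?_
      rw [Finset.card_image_of_injective _ π.symm.injective]
      omega
    · exact weight_eq_zero_of_not_subset hsub
  · -- level m+1 weights
    intro Y hY
    by_cases hmix : ∃ χ, Y = mixed al be χ
    · obtain ⟨χ, rfl⟩ := hmix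
      rw [← hmixed_img χ, hF, weight_mapHG, hmixed_img χ, pt_mixed hinj]
      rw [ptSign]
      exact h1 χ
    · push_neg at hmix
      rw [pt_eq_zero_of_not_mixed hmix, zero_smul]
      by_cases hsub : Y ⊆ verts F
      · have hYimg : (Y.image π.symm).image π = Y := by
          rw [Finset.image_image]; simp
        have hY₀sub : Y.image π.symm ⊆ A ∪ B ∪ C := by
          intro x hx
          obtain ⟨y, hy, rfl⟩ := Finset.mem_image.mp hx
          have hyv : y ∈ verts F := hsub hy
          rw [hF, verts_mapHG] at hyv
          obtain ⟨z, hz, hzeq⟩ := Finset.mem_image.mp hyv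
          have : π.symm y = z := by rw [← hzeq]; simp
          rw [this]; exact hvG₀ hz
        rw [hF, weight_mapHG']
        refine h2 _ hY₀sub ?_ ?_
        · rw [Finset.card_image_of_injective _ π.symm.injective]; exact hY
        · intro χ hχ
          apply hmix χ
          rw [← hYimg, hχ]
          exact (hmixed_img χ)
      · exact weight_eq_zero_of_not_subset hsub

end Rename
section Assembly

open Finset

variable {d : ℕ}

/-- Double-counting: summing level-`(|Z|+1)` weights over all extensions of `Z`
gives a multiple of the weight of `Z`. -/
lemma weight_extension_sum {k : ℕ} (H : HG d) (hH : IsHG k H) {W Z : Finset ℕ}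
    (hvert : verts H ⊆ W) (hZk : Z.card ≤ k) :
    ∑ v ∈ W \ Z, weight (insert v Z) H = (k - Z.card : ℕ) • weight Z H := by
  classical
  have hterm : ∀ v ∈ W \ Z, weight (insert v Z) H
      = ∑ e ∈ H.support.filter (fun e => Z ⊆ e), (if v ∈ e then H e else 0) := by
    intro v hv
    rw [weight, Finset.sum_filter, Finset.sum_filter]
    refine Finset.sum_congr rfl fun e _ => ?_
    by_cases hZe : Z ⊆ e
    · by_cases hve : v ∈ e
      · rw [if_pos (Finset.insert_subset hve hZe), if_pos hZe, if_pos hve]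
      · rw [if_neg, if_pos hZe, if_neg hve]
        rw [Finset.insert_subset_iff]
        exact fun h => hve h.1
    · rw [if_neg, if_neg hZe]
      rw [Finset.insert_subset_iff]
      exact fun h => hZe h.2
  rw [Finset.sum_congr rfl hterm, Finset.sum_comm]
  have hterm2 : ∀ e ∈ H.support.filter (fun e => Z ⊆ e),
      (∑ v ∈ W \ Z, if v ∈ e then H e else 0) = (k - Z.card : ℕ) • H e := by
    intro e he
    rw [Finset.mem_filter] at he
    rw [← Finset.sum_filter, Finset.filter_mem_eq_inter, Finset.sum_const]
    congr 1
    have hsets : (W \ Z) ∩ e = e \ Z := by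
      ext v
      simp only [Finset.mem_inter, Finset.mem_sdiff]
      constructor
      · rintro ⟨⟨-, hvZ⟩, hve⟩; exact ⟨hve, hvZ⟩
      · rintro ⟨hve, hvZ⟩
        exact ⟨⟨hvert (edge_subset_verts he.1 hve), hvZ⟩, hve⟩
    rw [hsets, Finset.card_sdiff_of_subset he.2, hH e he.1]
  rw [Finset.sum_congr rfl hterm2, ← Finset.smul_sum, weight]

lemma list_sum_eq_fin {X : Type*} (L : List X) (g : X → Fin d → ℤ) :
    (L.map g).sum = ∑ i : Fin L.length, g (L.get i) := by
  induction L with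
  | nil => simp
  | cons x L ih =>
    rw [List.map_cons, List.sum_cons, ih]
    show _ = ∑ i : Fin (L.length + 1), g ((x :: L).get i)
    rw [Fin.sum_univ_succ]
    rfl

end Assembly

theorem isolating_a_level'
    (k d m : ℕ) (hk : 1 ≤ k) (hd : 1 ≤ d) (hm : m < k)
    (H : HG d) (hH : IsHG k H) (hiso : IsIsolated m H)
    (V : Finset ℕ) (hV : verts H ⊆ V)
    (S : Set (HG d)) (hSk : ∀ F ∈ S, IsHG k F) (hS : SimpleFor k S {H}) :
    ∃ G ∈ Zsum (Eqs S),
      PreIsolated (m + 1) (H + G) ∧ (2 * k - 1 < V.card → Supports V G S) := by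
  classical
  -- the coefficient module
  set M := Submodule.span ℤ
    {w : Fin d → ℤ | ∃ G ∈ ({H} : Set (HG d)), ∃ X : Finset ℕ,
      X ⊆ verts G ∧ X.card = m + 1 ∧ w = weight X G} with hM
  -- the working ground set
  obtain ⟨W, hWV, hWcard, hWbig⟩ : ∃ W : Finset ℕ, V ⊆ W ∧ 2*k ≤ W.card ∧
      (2*k - 1 < V.card → W = V) := by
    by_cases hbig : 2*k - 1 < V.card
    · exact ⟨V, le_refl _, by omega, fun _ => rfl⟩
    · obtain ⟨D, hD1, hD2⟩ := Set.Infinite.exists_subset_card_eq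
        ((V.finite_toSet).infinite_compl) (2*k)
      refine ⟨V ∪ D, Finset.subset_union_left, ?_, fun h => absurd h hbig⟩
      have hdisj : Disjoint V D := by
        rw [Finset.disjoint_right]
        intro x hx
        have := hD1 hx
        simpa using this
      rw [Finset.card_union_of_disjoint hdisj, hD2]
      omega
  have hHW : verts H ⊆ W := hV.trans hWV
  have hweight0 : ∀ X : Finset ℕ, X.card ≤ m → weight X H = 0 := by
    intro X hX
    by_cases h : X ⊆ verts H
    · exact hiso X h hX
    · exact weight_eq_zero_of_not_subset h
  -- the level-(m+1) weight function of H
  set f : Finset ℕ → Fin d → ℤ :=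
    fun Y => if Y.card = m + 1 then weight Y H else 0 with hf
  have hfsupp : ∀ Y, f Y ≠ 0 → Y ⊆ W ∧ Y.card = m + 1 := by
    intro Y hY
    rw [hf] at hY
    simp only at hY
    by_cases hc : Y.card = m + 1
    · rw [if_pos hc] at hY
      by_cases hsub : Y ⊆ verts H
      · exact ⟨hsub.trans hHW, hc⟩
      · exact absurd (weight_eq_zero_of_not_subset hsub) hY
    · rw [if_neg hc] at hY
      exact absurd rfl hY
  have hfclosed : ∀ Z ⊆ W, Z.card + 1 = m + 1 → Dop W f Z = 0 := by
    intro Z hZ hZc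
    have hZm : Z.card = m := by omega
    rw [Dop]
    have hterm : ∀ v ∈ W \ Z, f (insert v Z) = weight (insert v Z) H := by
      intro v hv
      have hvZ : v ∉ Z := (Finset.mem_sdiff.mp hv).2
      rw [hf]
      simp only
      rw [if_pos (by rw [Finset.card_insert_of_notMem hvZ, hZm])]
    rw [Finset.sum_congr rfl hterm, weight_extension_sum H hH hHW (by omega)]
    rw [hweight0 Z (le_of_eq hZm), smul_zero]
  -- polytabloid expansion of f
  obtain ⟨L, hLok, hLeval⟩ := full_span ((m+1) + W.card) (m+1) W f (le_refl _)
    hfsupp hfclosed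
  -- span of the values of f is contained in M
  have hspan : Submodule.span ℤ (Set.range f) ≤ M := by
    rw [Submodule.span_le]
    rintro x ⟨Y, rfl⟩
    show f Y ∈ M
    rw [hf]
    simp only
    by_cases hc : Y.card = m + 1
    · rw [if_pos hc]
      by_cases hsub : Y ⊆ verts H
      · exact Submodule.subset_span ⟨H, Set.mem_singleton H, Y, hsub, hc, rfl⟩
      · rw [weight_eq_zero_of_not_subset hsub]
        exact Submodule.zero_mem _
    · rw [if_neg hc]
      exact Submodule.zero_mem _
  -- realize each polytabloid as a renamed simple hypergraph from S
  have hchoice : ∀ i : Fin L.length, ∃ F : HG d, F ∈ Eqs S ∧ verts F ⊆ W ∧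
      (∀ Y, Y.card ≤ m → weight Y F = 0) ∧
      (∀ Y, Y.card = m + 1 → weight Y F = pt (L.get i).al (L.get i).be Y • (L.get i).a) := by
    intro i
    obtain ⟨hpa, hpinj, hpT⟩ := hLok (L.get i) (by simpa using List.getElem_mem i.2)
    obtain ⟨G₀, hG₀S, hG₀simple⟩ := hS.2 (m+1) (by omega) _ (hspan hpa)
    exact exists_renamed_simple hm S W hWcard _ G₀ hG₀S hG₀simple _ _ hpinj hpT
  choose F hFeqs hFverts hFlow hFhigh using hchoice
  set G : HG d := ∑ i : Fin L.length, (-1 : ℤ) • F i with hG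
  have hwG : ∀ Y : Finset ℕ, weight Y G = ∑ i : Fin L.length, -(weight Y (F i)) := by
    intro Y
    rw [hG, weight_sum]
    refine Finset.sum_congr rfl fun i _ => ?_
    rw [weight_zsmul]
    simp
  have hlow : ∀ Y : Finset ℕ, Y.card ≤ m → weight Y (H + G) = 0 := by
    intro Y hY
    rw [weight_add, hweight0 Y hY, zero_add, hwG]
    refine Finset.sum_eq_zero fun i _ => ?_
    rw [hFlow i Y hY, neg_zero]
  have hhigh : ∀ Y : Finset ℕ, Y.card = m + 1 → weight Y (H + G) = 0 := by
    intro Y hY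
    rw [weight_add, hwG]
    have h1 : weight Y H = f Y := by rw [hf]; simp only [if_pos hY]
    have h2 : f Y = ∑ i : Fin L.length, pt (L.get i).al (L.get i).be Y • (L.get i).a := by
      rw [hLeval Y, list_sum_eq_fin]
      rfl
    rw [h1, h2]
    rw [← Finset.sum_add_distrib]
    refine Finset.sum_eq_zero fun i _ => ?_
    rw [hFhigh i Y hY]
    exact add_neg_cancel _
  refine ⟨G, ⟨L.length, fun _ => (-1 : ℤ), F, hFeqs, hG⟩, ⟨?_, ?_⟩, ?_⟩
  · -- (m+1) - 1 isolation
    intro X _ hXc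
    exact hlow X (by omega)
  · refine ⟨∅, Finset.empty_subset _, by simp, fun Y _ hYc _ => hhigh Y hYc⟩
  · intro hbig
    exact ⟨L.length, fun _ => (-1 : ℤ), F, hFeqs,
      fun i => (hFverts i).trans (le_of_eq (hWbig hbig)), hG⟩

/-- **Lemma (isolating the next level).**
Let `H = (V, μ)` be an `m`-isolated `k`-hypergraph of dimension `d` with
`m < k`, and let `S` be a family of `k`-hypergraphs of dimension `d` that is
simple for `{H}`.  Then there is a hypergraph `G ∈ Σ_ℤ(Eqs(S))` such that
`H + G` is pre `(m+1)`-isolated; moreover, if `|V| > 2k − 1`, then `V`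
supports `G` for the family `S`. -/
theorem isolating_a_level
    (k d m : ℕ) (hk : 1 ≤ k) (hd : 1 ≤ d) (hm : m < k)
    (H : HG d) (hH : IsHG k H) (hiso : IsIsolated m H)
    (V : Finset ℕ) (hV : verts H ⊆ V)
    (S : Set (HG d)) (hSk : ∀ F ∈ S, IsHG k F) (hS : SimpleFor k S {H}) :
    ∃ G ∈ Zsum (Eqs S),
      PreIsolated (m + 1) (H + G) ∧ (2 * k - 1 < V.card → Supports V G S) := by
  exact isolating_a_level' k d m hk hd hm H hH hiso V hV S hSk hS
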